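/- Every closed 2-form ω on the Lie algebra 𝔤₃ satisfies ω(e₆, X) = 0 for all X ∈ 𝔤₃; in particular, every closed 2-form on 𝔤₃ is degenerate, so 𝔤₃ admits no symplectic (i.e. closed nondegenerate) 2-form. -/

import Mathlib

noncomputable section

open LinearMap Module

abbrev V : Type := Fin 6 → ℝ

def e (i : Fin 6) : V := Pi.single i 1

theorem stmt_2
    (B : V →ₗ[ℝ] V →ₗ[ℝ] V)
    (hBanti : ∀ X Y, B X Y = - B Y X)
    (hB1 : B (e 0) (e 1) = e 3)
    (hB2 : B (e 0) (e 2) = e 4)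
    (hB3 : B (e 0) (e 3) = e 5)
    (hB4 : B (e 2) (e 4) = e 5)
    (hBz : ∀ i j : Fin 6, i < j → (i, j) ∉ ({(0,1),(0,2),(0,3),(2,4)} : Set (Fin 6 × Fin 6)) → B (e i) (e j) = 0)
    (ω : V →ₗ[ℝ] V →ₗ[ℝ] ℝ)
    (hωalt : ∀ X, ω X X = 0)
    (hclosed : ∀ X Y Z, ω (B X Y) Z - ω (B X Z) Y + ω (B Y Z) X = 0) :
    (∀ X, ω (e 5) X = 0) ∧ ¬ (∀ X : V, (∀ Y, ω X Y = 0) → X = 0) := by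
  have hanti : ∀ X Y, ω X Y = - ω Y X := by
    intro X Y
    have h := hωalt (X + Y)
    simp only [map_add, LinearMap.add_apply, hωalt X, hωalt Y] at h
    linarith
  -- zero brackets we need
  have z04 : B (e 0) (e 4) = 0 := hBz 0 4 (by decide) (by simp)
  have z05 : B (e 0) (e 5) = 0 := hBz 0 5 (by decide) (by simp)
  have z12 : B (e 1) (e 2) = 0 := hBz 1 2 (by decide) (by simp)
  have z13 : B (e 1) (e 3) = 0 := hBz 1 3 (by decide) (by simp)
  have z14 : B (e 1) (e 4) = 0 := hBz 1 4 (by decide) (by simp)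
  have z15 : B (e 1) (e 5) = 0 := hBz 1 5 (by decide) (by simp)
  have z23 : B (e 2) (e 3) = 0 := hBz 2 3 (by decide) (by simp)
  have z25 : B (e 2) (e 5) = 0 := hBz 2 5 (by decide) (by simp)
  have z34 : B (e 3) (e 4) = 0 := hBz 3 4 (by decide) (by simp)
  have z35 : B (e 3) (e 5) = 0 := hBz 3 5 (by decide) (by simp)
  have z43 : B (e 4) (e 3) = 0 := by rw [hBanti, z34, neg_zero]
  -- ω(e5, e1) = 0 from (0,1,3)
  have h51 : ω (e 5) (e 1) = 0 := by
    have h := hclosed (e 0) (e 1) (e 3)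
    rw [hB1, hB3, z13, hωalt] at h
    simp only [map_zero, LinearMap.zero_apply] at h
    linarith
  -- ω(e3, e4) = 0 from (0,1,4)
  have h34 : ω (e 3) (e 4) = 0 := by
    have h := hclosed (e 0) (e 1) (e 4)
    rw [hB1, z04, z14] at h
    simp only [map_zero, LinearMap.zero_apply] at h
    linarith
  -- ω(e3, e5) = 0 from (0,1,5)
  have h35 : ω (e 3) (e 5) = 0 := by
    have h := hclosed (e 0) (e 1) (e 5)
    rw [hB1, z05, z15] at h
    simp only [map_zero, LinearMap.zero_apply] at h
    linarith
  -- ω(e5, e2) = 0 from (0,2,3)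
  have h52 : ω (e 5) (e 2) = 0 := by
    have h := hclosed (e 0) (e 2) (e 3)
    rw [hB2, hB3, z23] at h
    simp only [map_zero, LinearMap.zero_apply] at h
    have h43 : ω (e 4) (e 3) = 0 := by rw [hanti]; rw [h34]; ring
    linarith
  -- ω(e5, e0) = 0 from (0,2,4)
  have h50 : ω (e 5) (e 0) = 0 := by
    have h := hclosed (e 0) (e 2) (e 4)
    rw [hB2, z04, hB4, hωalt] at h
    simp only [map_zero, LinearMap.zero_apply] at h
    linarith
  -- ω(e4, e5) = 0 from (0,2,5)
  have h45 : ω (e 4) (e 5) = 0 := by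
    have h := hclosed (e 0) (e 2) (e 5)
    rw [hB2, z05, z25] at h
    simp only [map_zero, LinearMap.zero_apply] at h
    linarith
  -- ω(e5, e4) = 0 from (0,3,4)
  have h54 : ω (e 5) (e 4) = 0 := by rw [hanti, h45]; ring
  -- ω(e5, e3) = 0 from (2,4,3)
  have h53 : ω (e 5) (e 3) = 0 := by
    have h := hclosed (e 2) (e 4) (e 3)
    rw [hB4, z23, z43] at h
    simp only [map_zero, LinearMap.zero_apply] at h
    linarith
  have h55 : ω (e 5) (e 5) = 0 := hωalt _
  have key : ∀ X, ω (e 5) X = 0 := by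
    intro X
    have hX : X = ∑ i : Fin 6, X i • e i := by
      funext j
      simp [e, Finset.sum_apply, Pi.single_apply]
    rw [hX, map_sum]
    simp only [map_smul, smul_eq_mul]
    rw [Fin.sum_univ_six]
    rw [h50, h51, h52, h53, h54, h55]
    ring
  refine ⟨key, fun h => ?_⟩
  have := h (e 5) (key)
  have h5 : (e 5 : V) 5 = 1 := by simp [e]
  rw [this] at h5
  simp at h5
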